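/- Let n, j, k be positive integers with 2 ≤ j ≤ √n and ⌊n/j⌋ + j − 1 ≤ k ≤ ⌊n/(j−1)⌋ + j − 3. Then N(n, k) = n − j + 1. -/

import Mathlib

/-- A set `S` of permutations of `{1,…,n}` (modelled as `Fin n`) is `k`-suitable if for
every pointed `k`-subset `(A, a)` there is `σ ∈ S` with `σ b ≤ σ a` for every `b ∈ A`. -/
def IsSuitable (n k : ℕ) (S : Finset (Equiv.Perm (Fin n))) : Prop :=
  ∀ A : Finset (Fin n), A.card = k → ∀ a ∈ A, ∃ σ ∈ S, ∀ b ∈ A, σ b ≤ σ a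

/-- `N(n, k)`: the minimum cardinality of a `k`-suitable set of permutations of `{1,…,n}`. -/
noncomputable def suitableNumber (n k : ℕ) : ℕ :=
  sInf {m : ℕ | ∃ S : Finset (Equiv.Perm (Fin n)), IsSuitable n k S ∧ S.card = m}

open Finset

lemma lower_bound (n j k : ℕ) (hn : 1 ≤ n) (hj2 : 2 ≤ j) (hjn : j * j ≤ n)
    (hk1 : n / j + j - 1 ≤ k) (hkn : k ≤ n)
    (S : Finset (Equiv.Perm (Fin n))) (hS : IsSuitable n k S) :
    n - j + 1 ≤ S.card := by
  by_contra hcon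
  push_neg at hcon
  have hjn' : j ≤ n := le_trans (Nat.le_mul_of_pos_left j (by omega)) hjn
  have hm : S.card ≤ n - j := by omega
  set top : Equiv.Perm (Fin n) → Fin n := fun σ => σ.symm ⟨n-1, by omega⟩ with htop
  set T : Finset (Fin n) := S.image top with hT
  have hTcard : T.card ≤ S.card := Finset.card_image_le
  have hcompl : j ≤ (univ \ T).card := by
    have := Finset.card_sdiff_of_subset (Finset.subset_univ T)
    rw [this, Finset.card_univ, Fintype.card_fin]
    omega
  obtain ⟨X, hXsub, hXcard⟩ := Finset.exists_subset_card_eq hcompl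
  have hXne : X.Nonempty := Finset.card_pos.mp (by omega)
  have himne : ∀ σ : Equiv.Perm (Fin n), (X.image σ).Nonempty := fun σ => hXne.image σ
  set xhat : Equiv.Perm (Fin n) → Fin n :=
    fun σ => σ.symm ((X.image σ).max' (himne σ)) with hxhat
  have hxhat_mem : ∀ σ, xhat σ ∈ X := by
    intro σ
    obtain ⟨x, hx, hxe⟩ := Finset.mem_image.mp ((X.image σ).max'_mem (himne σ))
    have : xhat σ = x := by simp [hxhat, ← hxe]
    rwa [this]
  have hxhat_max : ∀ σ : Equiv.Perm (Fin n), ∀ x ∈ X, σ x ≤ σ (xhat σ) := by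
    intro σ x hx
    have h1 : σ (xhat σ) = (X.image σ).max' (himne σ) := by simp [hxhat]
    rw [h1]
    exact Finset.le_max' _ _ (Finset.mem_image_of_mem σ hx)
  have hsum : S.card = ∑ x ∈ X, (S.filter (fun σ => xhat σ = x)).card :=
    Finset.card_eq_sum_card_fiberwise (fun σ _ => hxhat_mem σ)
  have hpig : ∃ x ∈ X, (S.filter (fun σ => xhat σ = x)).card ≤ (n-j)/j := by
    by_contra hc
    push_neg at hc
    have hle : X.card • ((n-j)/j + 1) ≤ ∑ x ∈ X, (S.filter (fun σ => xhat σ = x)).card :=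
      Finset.card_nsmul_le_sum X _ _ (fun x hx => hc x hx)
    rw [hXcard, smul_eq_mul] at hle
    have hdm := Nat.div_add_mod (n-j) j
    have hmod : (n-j) % j < j := Nat.mod_lt _ (by omega)
    have hmul : j * ((n-j)/j + 1) = j * ((n-j)/j) + j := by ring
    omega
  obtain ⟨x, hxX, hfib⟩ := hpig
  set F := S.filter (fun σ => xhat σ = x) with hF
  set H : Finset (Fin n) := (X.erase x) ∪ F.image top with hH
  have hHcard : (insert x H).card ≤ k := by
    have h1 : H.card ≤ (X.erase x).card + (F.image top).card := Finset.card_union_le _ _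
    have h2 : (X.erase x).card = j - 1 := by rw [Finset.card_erase_of_mem hxX, hXcard]
    have h3 : (F.image top).card ≤ (n-j)/j := le_trans Finset.card_image_le hfib
    have h4 : (insert x H).card ≤ H.card + 1 := Finset.card_insert_le _ _
    have h5 : n / j = (n-j)/j + 1 := by
      have h6 : n / j = (n - j + j) / j := by rw [(by omega : n - j + j = n)]
      rw [h6, Nat.add_div_right _ (by omega : 0 < j)]
    omega
  obtain ⟨A, hAsub, hAcard⟩ := Finset.exists_superset_card_eq hHcard
    (by rw [Fintype.card_fin]; exact hkn)
  have hxA : x ∈ A := hAsub (Finset.mem_insert_self x H)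
  obtain ⟨σ, hσS, hserve⟩ := hS A hAcard x hxA
  by_cases hxe : xhat σ = x
  · -- top σ ∈ A, contradiction
    have hσF : σ ∈ F := Finset.mem_filter.mpr ⟨hσS, hxe⟩
    have htA : top σ ∈ A := hAsub (Finset.mem_insert_of_mem
      (Finset.mem_union_right _ (Finset.mem_image_of_mem top hσF)))
    have h1 : σ (top σ) ≤ σ x := hserve _ htA
    have h2 : σ (top σ) = ⟨n-1, by omega⟩ := σ.apply_symm_apply _
    have h3 : σ x ≤ σ (top σ) := by
      rw [h2, Fin.le_def]
      have := (σ x).isLt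
      simp
      omega
    have h4 : σ x = σ (top σ) := le_antisymm h3 h1
    have h5 : x = top σ := σ.injective h4
    have : x ∈ T := by rw [h5]; exact Finset.mem_image_of_mem top hσS
    have : x ∉ T := (Finset.mem_sdiff.mp (hXsub hxX)).2
    tauto
  · have hx'X : xhat σ ∈ X.erase x := Finset.mem_erase.mpr ⟨hxe, hxhat_mem σ⟩
    have hx'A : xhat σ ∈ A := hAsub (Finset.mem_insert_of_mem (Finset.mem_union_left _ hx'X))
    have h1 : σ (xhat σ) ≤ σ x := hserve _ hx'A
    have h2 : σ x ≤ σ (xhat σ) := hxhat_max σ x hxX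
    exact hxe (σ.injective (le_antisymm h1 h2))

lemma exists_perm_two {α : Type*} [DecidableEq α] (a b u v : α) (hab : a ≠ b) (huv : u ≠ v) :
    ∃ σ : Equiv.Perm α, σ a = u ∧ σ b = v := by
  refine ⟨Equiv.swap v (Equiv.swap u a b) * Equiv.swap u a, ?_, ?_⟩
  · simp only [Equiv.Perm.mul_apply, Equiv.swap_apply_right]
    refine Equiv.swap_apply_of_ne_of_ne huv fun h => hab ?_
    exact (Equiv.swap u a).injective
      (show (Equiv.swap u a) a = (Equiv.swap u a) b by rw [Equiv.swap_apply_right]; exact h)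
  · simp only [Equiv.Perm.mul_apply, Equiv.swap_apply_right]

lemma exists_perm_three {α : Type*} [DecidableEq α] (a b c u v w : α)
    (hab : a ≠ b) (hac : a ≠ c) (hbc : b ≠ c)
    (huv : u ≠ v) (huw : u ≠ w) (hvw : v ≠ w) :
    ∃ σ : Equiv.Perm α, σ a = u ∧ σ b = v ∧ σ c = w := by
  obtain ⟨τ, hτa, hτb⟩ := exists_perm_two a b u v hab huv
  refine ⟨Equiv.swap w (τ c) * τ, ?_, ?_, ?_⟩
  · simp only [Equiv.Perm.mul_apply, hτa]
    exact Equiv.swap_apply_of_ne_of_ne huw fun h => hac (τ.injective (hτa.trans h))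
  · simp only [Equiv.Perm.mul_apply, hτb]
    exact Equiv.swap_apply_of_ne_of_ne hvw fun h => hbc (τ.injective (hτb.trans h))
  · simp only [Equiv.Perm.mul_apply, Equiv.swap_apply_right]

lemma upper_bound (n j k : ℕ) (hj2 : 2 ≤ j) (hjn : j * j ≤ n) (hk : 1 ≤ k)
    (hk2 : k ≤ n / (j - 1) + j - 3) :
    ∃ S : Finset (Equiv.Perm (Fin n)), IsSuitable n k S ∧ S.card = n - j + 1 := by
  classical
  set p := j - 1 with hpdef
  have hp1 : 1 ≤ p := by omega
  have hpn : p * (p + 2) < n := by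
    have hj1 : p + 1 = j := by omega
    have h2 : (p + 1) * (p + 1) ≤ n := by rw [hj1]; exact hjn
    nlinarith
  have hnp : p + 2 ≤ n / p := (Nat.le_div_iff_mul_le (by omega)).mpr (by nlinarith [hpn])
  set q := n / p - 1 with hqdef
  have hq2 : p + 1 ≤ q := by omega
  have hqp : p * (q + 1) ≤ n := by
    have h1 : n / p * p ≤ n := Nat.div_mul_le_self n p
    have h2 : q + 1 = n / p := by omega
    calc p * (q + 1) = (q + 1) * p := by ring
      _ = n / p * p := by rw [h2]
      _ ≤ n := h1
  have hmul : q * p + p ≤ n := by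
    calc q * p + p = p * (q + 1) := by ring
      _ ≤ n := hqp
  have hqlesp : q ≤ q * p := Nat.le_mul_of_pos_right q (by omega)
  have hkq : k ≤ q + p - 1 := by omega
  have hn3 : 3 ≤ n := by omega
  have hpn' : p + 1 ≤ n := by omega
  -- index functions
  set blk : ℕ → ℕ := fun i => min (i / q) (p - 1) with hblkdef
  set pos : ℕ → ℕ := fun i => i - q * blk i with hposdef
  set tgt : ℕ → ℕ := fun i => if pos i < blk i then pos i else pos i + 1 with htgtdef
  have hblkle : ∀ i, blk i ≤ p - 1 := fun i => min_le_right _ _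
  have hblkd : ∀ r d, r ≤ p - 1 → d < q → blk (q * r + d) = r ∧ pos (q * r + d) = d := by
    intro r d hr hd
    have h1 : (q * r + d) / q = r := by
      rw [Nat.mul_add_div (by omega : 0 < q), Nat.div_eq_of_lt hd]
      omega
    constructor
    · simp only [hblkdef, h1]
      exact min_eq_left hr
    · have hb : blk (q * r + d) = r := by
        simp only [hblkdef, h1]; exact min_eq_left hr
      simp only [hposdef, hb]
      omega
  have htgtp : ∀ i, pos i < p - 1 → tgt i ≤ p - 1 ∧ tgt i ≠ blk i := by
    intro i hi
    have hb := hblkle i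
    simp only [htgtdef]
    split
    · constructor <;> omega
    · constructor <;> omega
  -- elements
  set pl : ℕ → Fin n := fun i => ⟨p + min i (n - p - 1), by
    have := min_le_right i (n - p - 1); omega⟩ with hpldef
  set sp : ℕ → Fin n := fun r => ⟨min r (p - 1), by
    have := min_le_right r (p - 1); omega⟩ with hspdef
  have hplval : ∀ i, i < n - p → (pl i).val = p + i := by
    intro i hi
    simp only [hpldef]
    have : min i (n - p - 1) = i := min_eq_left (by omega)
    rw [this]
  have hspval : ∀ r, r ≤ p - 1 → (sp r).val = r := by
    intro r hr
    simp only [hspdef]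
    exact min_eq_left hr
  have hplsp : ∀ i r, pl i ≠ sp r := by
    intro i r h
    have h1 : (pl i).val = p + min i (n - p - 1) := rfl
    have h2 : (sp r).val = min r (p - 1) := rfl
    have := congrArg Fin.val h
    have h3 := min_le_right r (p - 1)
    omega
  -- the permutations
  have hex : ∀ i : Fin (n - p), ∃ σ : Equiv.Perm (Fin n),
      σ (pl i.val) = ⟨n - 1, by omega⟩ ∧ σ (sp (blk i.val)) = ⟨n - 2, by omega⟩ ∧
      (pos i.val < p - 1 → σ (sp (tgt i.val)) = ⟨n - 3, by omega⟩) := by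
    intro i
    by_cases hdes : pos i.val < p - 1
    · obtain ⟨htle, htne⟩ := htgtp i.val hdes
      obtain ⟨σ, h1, h2, h3⟩ := exists_perm_three (pl i.val) (sp (blk i.val)) (sp (tgt i.val))
        (⟨n - 1, by omega⟩ : Fin n) ⟨n - 2, by omega⟩ ⟨n - 3, by omega⟩
        (hplsp _ _) (hplsp _ _)
        (by
          intro h
          have := congrArg Fin.val h
          rw [hspval _ (hblkle i.val), hspval _ htle] at this
          exact htne (this.symm))
        (by intro h; have := congrArg Fin.val h; simp at this; omega)
        (by intro h; have := congrArg Fin.val h; simp at this; omega)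
        (by intro h; have := congrArg Fin.val h; simp at this; omega)
      exact ⟨σ, h1, h2, fun _ => h3⟩
    · obtain ⟨σ, h1, h2⟩ := exists_perm_two (pl i.val) (sp (blk i.val))
        (⟨n - 1, by omega⟩ : Fin n) ⟨n - 2, by omega⟩ (hplsp _ _)
        (by intro h; have := congrArg Fin.val h; simp at this; omega)
      exact ⟨σ, h1, h2, fun h => absurd h hdes⟩
  choose f hf using hex
  have hfinj : Function.Injective f := by
    intro i₁ i₂ h
    have h1 := (hf i₁).1
    have h2 := (hf i₂).1
    rw [h] at h1
    have h3 : pl i₁.val = pl i₂.val := (f i₂).injective (h1.trans h2.symm)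
    have h4 := congrArg Fin.val h3
    rw [hplval _ i₁.isLt, hplval _ i₂.isLt] at h4
    exact Fin.ext (by omega)
  refine ⟨Finset.image f Finset.univ, ?_, ?_⟩
  swap
  · rw [Finset.card_image_of_injective _ hfinj, Finset.card_univ, Fintype.card_fin]
    omega
  -- suitability
  intro A hA a ha
  by_cases hap : p ≤ a.val
  · -- a is a plain element
    have hilt : a.val - p < n - p := by have := a.isLt; omega
    set i : Fin (n - p) := ⟨a.val - p, hilt⟩ with hidef
    have hpa : pl i.val = a := by
      apply Fin.ext
      rw [hplval _ hilt]
      exact show p + (a.val - p) = a.val by omega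
    refine ⟨f i, Finset.mem_image_of_mem f (Finset.mem_univ i), ?_⟩
    intro b hb
    have h1 := (hf i).1
    rw [hpa] at h1
    rw [h1, Fin.le_def]
    exact show (f i b).val ≤ n - 1 by have := (f i b).isLt; omega
  · -- a is a special element
    push_neg at hap
    set l := a.val with hldef
    have hspl : sp l = a := by
      apply Fin.ext
      rw [hspval _ (by omega)]
    set E : ℕ → ℕ := fun r => if r < l then r else r - 1 with hEdef
    set ψ : Fin n → ℕ := fun b => if b.val < p then q + E b.val else
      (if blk (b.val - p) = l then pos (b.val - p) else q + E (blk (b.val - p))) with hψdef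
    set R : ℕ → ℕ := fun c => if c - q < l then c - q else c - q + 1 with hRdef
    set D : ℕ → ℕ := fun c => if l < R c then l else l - 1 with hDdef
    set wI : ℕ → ℕ := fun c => if c < q then q * l + c else q * R c + D c with hwIdef
    set W : ℕ → Finset (Fin n) := fun c =>
      if c < q then {pl (wI c)} else {pl (wI c), sp (R c)} with hWdef
    have hψpl : ∀ x, x < n - p → ψ (pl x) = if blk x = l then pos x else q + E (blk x) := by
      intro x hx
      have hmin : x ⊓ (n - p - 1) = x := min_eq_left (by omega)
      simp only [hψdef, hpldef, hmin]
      rw [if_neg (by omega : ¬ (p + x < p))]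
      rw [show p + x - p = x from by omega]
    have hψsp : ∀ r, r ≤ p - 1 → ψ (sp r) = q + E r := by
      intro r hr
      have hmin : r ⊓ (p - 1) = r := min_eq_left hr
      simp only [hψdef, hspdef, hmin]
      rw [if_pos (by omega : r < p)]
    have hqlc : ∀ r x, r ≤ p - 1 → x < q → q * r + x < n - p := by
      intro r x hr hx
      have h1 : q * (r + 1) ≤ q * p := Nat.mul_le_mul_left q (by omega)
      have h2 : q * (r + 1) = q * r + q := by ring
      omega
    have hsing : ∀ c, c < q → wI c < n - p ∧ blk (wI c) = l ∧ pos (wI c) = c := by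
      intro c hc
      have hw : wI c = q * l + c := by simp only [hwIdef]; rw [if_pos hc]
      have hb := hblkd l c (by omega) hc
      rw [hw]
      exact ⟨hqlc l c (by omega) hc, hb.1, hb.2⟩
    have hcross : ∀ c, q ≤ c → c < q + p - 1 →
        R c ≤ p - 1 ∧ R c ≠ l ∧ wI c < n - p ∧ blk (wI c) = R c ∧ pos (wI c) = D c ∧
        D c < p - 1 ∧ tgt (wI c) = l := by
      intro c h1 h2
      have he : c - q < p - 1 := by omega
      have hR1 : R c ≤ p - 1 := by simp only [hRdef]; split <;> omega
      have hR2 : R c ≠ l := by simp only [hRdef]; split <;> omega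
      have hRl : (c - q < l ∧ R c = c - q ∧ R c < l) ∨ (¬(c - q < l) ∧ R c = c - q + 1 ∧ l < R c) := by
        simp only [hRdef]; split
        · left; exact ⟨by assumption, rfl, by assumption⟩
        · right; exact ⟨by assumption, rfl, by omega⟩
      have hD1 : D c < p - 1 := by
        simp only [hDdef]; split
        · omega
        · omega
      have hw : wI c = q * R c + D c := by simp only [hwIdef]; rw [if_neg (by omega)]
      have hb := hblkd (R c) (D c) hR1 (by omega)
      have hwlt : wI c < n - p := by rw [hw]; exact hqlc _ _ hR1 (by omega)
      refine ⟨hR1, hR2, hwlt, by rw [hw]; exact hb.1, by rw [hw]; exact hb.2, hD1, ?_⟩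
      have htg : tgt (wI c) = if D c < R c then D c else D c + 1 := by
        simp only [htgtdef]
        rw [hw, hb.1, hb.2]
      rw [htg]
      by_cases hlr : l < R c
      · have hD : D c = l := by simp only [hDdef]; rw [if_pos hlr]
        rw [hD, if_pos hlr]
      · have hRl' : R c < l := by omega
        have hD : D c = l - 1 := by simp only [hDdef]; rw [if_neg hlr]
        rw [hD, if_neg (by omega)]
        omega
    have hψW : ∀ c, c < q + p - 1 → ∀ b ∈ W c, ψ b = c := by
      intro c hc b hb
      by_cases hcq : c < q
      · have hsg := hsing c hcq
        have hbW : b = pl (wI c) := by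
          simp only [hWdef] at hb
          rw [if_pos hcq] at hb
          exact Finset.mem_singleton.mp hb
        rw [hbW, hψpl _ hsg.1, if_pos hsg.2.1]
        exact hsg.2.2
      · obtain ⟨hR1, hR2, hwlt, hbl, hps, hD1, htg⟩ := hcross c (by omega) hc
        have hE : E (R c) = c - q := by
          simp only [hEdef, hRdef]
          by_cases h : c - q < l
          · rw [if_pos h, if_pos h]
          · rw [if_neg h, if_neg (by omega)]
            omega
        simp only [hWdef] at hb
        rw [if_neg hcq] at hb
        rcases Finset.mem_insert.mp hb with hb1 | hb2
        · rw [hb1, hψpl _ hwlt, hbl, if_neg hR2, hE]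
          omega
        · rw [Finset.mem_singleton.mp hb2, hψsp _ hR1, hE]
          omega
    -- find a witness index c whose witness set avoids A.erase a
    have hkey : ∃ c, c < q + p - 1 ∧ ∀ b ∈ A.erase a, b ∉ W c := by
      by_contra hcon
      push_neg at hcon
      have hsub : Finset.range (q + p - 1) ⊆ (A.erase a).image ψ := by
        intro c hc
        obtain ⟨b, hb1, hb2⟩ := hcon c (Finset.mem_range.mp hc)
        exact Finset.mem_image.mpr ⟨b, hb1, hψW c (Finset.mem_range.mp hc) b hb2⟩
      have h1 := Finset.card_le_card hsub
      rw [Finset.card_range] at h1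
      have h2 : ((A.erase a).image ψ).card ≤ (A.erase a).card := Finset.card_image_le
      rw [Finset.card_erase_of_mem ha, hA] at h2
      omega
    obtain ⟨c, hc, hcW⟩ := hkey
    by_cases hcq : c < q
    · obtain ⟨hwlt, hbl, hps⟩ := hsing c hcq
      set i : Fin (n - p) := ⟨wI c, hwlt⟩ with hidef
      obtain ⟨h1, h2, _⟩ := hf i
      refine ⟨f i, Finset.mem_image_of_mem f (Finset.mem_univ i), ?_⟩
      intro b hb
      by_cases hba : b = a
      · rw [hba]
      · have ha2 : f i a = ⟨n - 2, by omega⟩ := by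
          have e : a = sp (blk i.val) := by rw [show blk i.val = l from hbl]; exact hspl.symm
          exact (congrArg (f i) e).trans h2
        have hbW : b ∉ W c := hcW b (Finset.mem_erase.mpr ⟨hba, hb⟩)
        have hbne : (f i b).val ≠ n - 1 := by
          intro hv
          apply hbW
          have he : f i b = f i (pl i.val) := by
            rw [h1]; exact Fin.ext hv
          have : b = pl i.val := (f i).injective he
          simp only [hWdef]
          rw [if_pos hcq, this]
          exact Finset.mem_singleton_self _
        rw [ha2, Fin.le_def]
        exact show (f i b).val ≤ n - 2 by have := (f i b).isLt; omega
    · obtain ⟨hR1, hR2, hwlt, hbl, hps, hD1, htg⟩ := hcross c (by omega) hc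
      set i : Fin (n - p) := ⟨wI c, hwlt⟩ with hidef
      obtain ⟨h1, h2, h3⟩ := hf i
      have h3' := h3 (by rw [show pos i.val = D c from hps]; exact hD1)
      refine ⟨f i, Finset.mem_image_of_mem f (Finset.mem_univ i), ?_⟩
      intro b hb
      by_cases hba : b = a
      · rw [hba]
      · have ha3 : f i a = ⟨n - 3, by omega⟩ := by
          have e : a = sp (tgt i.val) := by rw [show tgt i.val = l from htg]; exact hspl.symm
          exact (congrArg (f i) e).trans h3'
        have hbW : b ∉ W c := hcW b (Finset.mem_erase.mpr ⟨hba, hb⟩)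
        have hWc : W c = {pl (wI c), sp (R c)} := by
          simp only [hWdef]; rw [if_neg hcq]
        have hbne1 : (f i b).val ≠ n - 1 := by
          intro hv
          apply hbW
          have he : f i b = f i (pl i.val) := by rw [h1]; exact Fin.ext hv
          have : b = pl i.val := (f i).injective he
          rw [hWc, this]
          exact Finset.mem_insert_self _ _
        have hbne2 : (f i b).val ≠ n - 2 := by
          intro hv
          apply hbW
          have he : f i b = f i (sp (blk i.val)) := by rw [h2]; exact Fin.ext hv
          have hbe : b = sp (blk i.val) := (f i).injective he
          rw [hWc, hbe, show blk i.val = R c from hbl]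
          exact Finset.mem_insert_of_mem (Finset.mem_singleton_self _)
        rw [ha3, Fin.le_def]
        exact show (f i b).val ≤ n - 3 by have := (f i b).isLt; omega

/-- Dushnik's theorem: if `2 ≤ j ≤ √n` and `⌊n/j⌋ + j - 1 ≤ k ≤ ⌊n/(j-1)⌋ + j - 3`,
then `N(n, k) = n - j + 1`. -/
theorem suitableNumber_eq (n j k : ℕ) (hn : 1 ≤ n) (hk : 1 ≤ k) (hj2 : 2 ≤ j)
    (hjn : (j : ℝ) ≤ Real.sqrt n)
    (hk1 : n / j + j - 1 ≤ k) (hk2 : k ≤ n / (j - 1) + j - 3) :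
    suitableNumber n k = n - j + 1 := by
  have hjj : j * j ≤ n := by
    have h1 : ((j : ℝ)) ^ 2 ≤ (n : ℝ) :=
      (Real.le_sqrt (by positivity) (by positivity)).mp hjn
    have h2 : ((j * j : ℕ) : ℝ) ≤ ((n : ℕ) : ℝ) := by push_cast; nlinarith [h1]
    exact_mod_cast h2
  have hkn : k ≤ n := by
    set p := j - 1 with hpdef
    have hp1 : 1 ≤ p := by omega
    have hpn : p * (p + 2) < n := by
      have hj1 : p + 1 = j := by omega
      have h2 : (p + 1) * (p + 1) ≤ n := by rw [hj1]; exact hjj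
      nlinarith
    have hnp : p + 2 ≤ n / p := (Nat.le_div_iff_mul_le (by omega)).mpr (by nlinarith [hpn])
    set q := n / p - 1 with hqdef
    have hqp : p * (q + 1) ≤ n := by
      have h1 : n / p * p ≤ n := Nat.div_mul_le_self n p
      have h2 : q + 1 = n / p := by omega
      calc p * (q + 1) = (q + 1) * p := by ring
        _ = n / p * p := by rw [h2]
        _ ≤ n := h1
    have hmul : q * p + p ≤ n := by
      calc q * p + p = p * (q + 1) := by ring
        _ ≤ n := hqp
    have hqlesp : q ≤ q * p := Nat.le_mul_of_pos_right q (by omega)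
    omega
  obtain ⟨S₀, hS₀, hc₀⟩ := upper_bound n j k hj2 hjj hk hk2
  apply le_antisymm
  · exact Nat.sInf_le ⟨S₀, hS₀, hc₀⟩
  · have hne : {m : ℕ | ∃ S : Finset (Equiv.Perm (Fin n)),
        IsSuitable n k S ∧ S.card = m}.Nonempty := ⟨S₀.card, S₀, hS₀, rfl⟩
    obtain ⟨S, hS, hcS⟩ := Nat.sInf_mem hne
    rw [suitableNumber, ← hcS]
    exact lower_bound n j k hn hj2 hjj hk1 hkn S hS
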